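/- arXiv:1511.04762 — 8 statements merged into one kernel-verified Lean document; each statement's English description precedes it below -/
import Mathlib

section
/- Let α be a type with decidable equality, let L be an even natural number, and let l : List α satisfy List.Chain' (· ≠ ·) l and l.length ≤ L. Then for every a : α, 2 * l.count a ≤ L. -/
lemma chain_count_aux {α : Type*} [DecidableEq α] (a : α) :
    ∀ l : List α, List.Chain' (· ≠ ·) l → 2 * l.count a ≤ l.length + 1
  | [], _ => by simp
  | [x], _ => by by_cases h : x = a <;> simp [List.count_cons, h]
  | x :: y :: t, h => by
    have hxy : x ≠ y := (List.isChain_cons_cons.mp h).1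
    have ht : List.Chain' (· ≠ ·) t := ((List.isChain_cons_cons.mp h).2).tail
    have ih := chain_count_aux a t ht
    have hc : (x :: y :: t).count a ≤ t.count a + 1 := by
      simp only [List.count_cons]
      by_cases hx : x = a <;> by_cases hy : y = a <;> simp_all <;> omega
    simp only [List.length_cons]
    omega

theorem valid_bin_count_le_of_even_capacity {α : Type*} [DecidableEq α] (L : ℕ)
    (hL : Even L) (l : List α) (h : List.Chain' (· ≠ ·) l) (hlen : l.length ≤ L) (a : α) :
    2 * l.count a ≤ L := by
  have := chain_count_aux a l h
  obtain ⟨k, rfl⟩ := hL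
  omega
end

section
/- Let α be a type with decidable equality and s : Multiset α a nonempty multiset such that for every color a : α, 2 * s.count a ≤ Multiset.card s + 1. Then there exists a list l : List α with (l : Multiset α) = s and List.Chain' (· ≠ ·) l; i.e., all items can be packed into a single valid bin. -/
private lemma count_add_count_le {α : Type*} [DecidableEq α] (s : Multiset α) {x a : α}
    (h : x ≠ a) : s.count x + s.count a ≤ Multiset.card s := by
  induction s using Multiset.induction with
  | empty => simp
  | cons c t ih =>
    simp only [Multiset.count_cons, Multiset.card_cons]
    split_ifs with h1 h2 h2
    · exact absurd (h1.trans h2.symm) h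
    all_goals omega

private lemma aux_chain {α : Type*} [DecidableEq α] :
    ∀ n (s : Multiset α) (b : α), Multiset.card s = n →
    (∀ x, 2 * s.count x ≤ n + 1) → 2 * s.count b ≤ n →
    ∃ l : List α, (l : Multiset α) = s ∧ List.Chain' (· ≠ ·) (b :: l) := by
  intro n
  induction n with
  | zero =>
    intro s b hcard _ _
    refine ⟨[], ?_, List.isChain_singleton b⟩
    simpa using (Multiset.card_eq_zero.mp hcard).symm
  | succ n ih =>
    intro s b hcard hall hb
    have hsne : s ≠ 0 := by intro h; simp [h] at hcard
    have hex : ∃ x ∈ s, x ≠ b := by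
      by_contra h
      push_neg at h
      have hcb : s.count b = Multiset.card s := by
        rw [Multiset.count_eq_card]
        intro y hy
        exact (h y hy).symm
      rw [hcb, hcard] at hb
      omega
    obtain ⟨x0, hx0s, hx0b⟩ := hex
    have hfne : (s.toFinset.filter (· ≠ b)).Nonempty :=
      ⟨x0, by simp [Multiset.mem_toFinset.mpr hx0s, hx0b]⟩
    obtain ⟨a, haf, hamax⟩ :=
      Finset.exists_max_image (s.toFinset.filter (· ≠ b)) (fun x => s.count x) hfne
    simp only [Finset.mem_filter, Multiset.mem_toFinset] at haf
    obtain ⟨has, hab⟩ := haf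
    -- apply ih to s.erase a with forbidden a
    have hcard' : Multiset.card (s.erase a) = n := by
      rw [Multiset.card_erase_of_mem has, hcard]
      rfl
    have hcount_a : 1 ≤ s.count a := Multiset.one_le_count_iff_mem.mpr has
    have hall' : ∀ x, 2 * (s.erase a).count x ≤ n + 1 := by
      intro x
      by_cases hxa : x = a
      · rw [hxa, Multiset.count_erase_self]
        have := hall a
        omega
      · rw [Multiset.count_erase_of_ne hxa]
        by_cases hxs : x ∈ s
        · by_cases hxb : x = b
          · subst hxb; omega
          · have hle : s.count x ≤ s.count a := by
              have := hamax x (by simp [Multiset.mem_toFinset.mpr hxs, hxb])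
              simpa using this
            have hsum : s.count x + s.count a ≤ Multiset.card s :=
              count_add_count_le s hxa
            omega
        · simp [Multiset.count_eq_zero_of_notMem hxs]
    have hb' : 2 * (s.erase a).count a ≤ n := by
      rw [Multiset.count_erase_self]
      have := hall a
      omega
    obtain ⟨l, hl, hchain⟩ := ih (s.erase a) a hcard' hall' hb'
    refine ⟨a :: l, ?_, ?_⟩
    · rw [← Multiset.cons_coe, hl]
      exact Multiset.cons_erase has
    · exact List.IsChain.cons_cons (Ne.symm hab) hchain

theorem single_bin_of_low_discrepancy {α : Type*} [DecidableEq α] (s : Multiset α)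
    (hne : s ≠ 0)
    (hdisc : ∀ a : α, 2 * s.count a ≤ Multiset.card s + 1) :
    ∃ l : List α, (l : Multiset α) = s ∧ List.Chain' (· ≠ ·) l := by
  obtain ⟨a, has, hamax⟩ :=
    Finset.exists_max_image s.toFinset (fun x => s.count x) (by
      rwa [Multiset.toFinset_nonempty])
  rw [Multiset.mem_toFinset] at has
  obtain ⟨n, hn⟩ : ∃ n, Multiset.card s = n + 1 := by
    have : Multiset.card s ≠ 0 := by simpa using hne
    exact ⟨Multiset.card s - 1, by omega⟩
  have hcount_a : 1 ≤ s.count a := Multiset.one_le_count_iff_mem.mpr has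
  have hcard' : Multiset.card (s.erase a) = n := by
    rw [Multiset.card_erase_of_mem has, hn]
    rfl
  have hall' : ∀ x, 2 * (s.erase a).count x ≤ n + 1 := by
    intro x
    by_cases hxa : x = a
    · rw [hxa, Multiset.count_erase_self]
      have := hdisc a
      omega
    · rw [Multiset.count_erase_of_ne hxa]
      by_cases hxs : x ∈ s
      · have hle : s.count x ≤ s.count a := by
          have := hamax x (Multiset.mem_toFinset.mpr hxs)
          simpa using this
        have hsum : s.count x + s.count a ≤ Multiset.card s :=
          count_add_count_le s hxa
        omega
      · simp [Multiset.count_eq_zero_of_notMem hxs]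
  have hb' : 2 * (s.erase a).count a ≤ n := by
    rw [Multiset.count_erase_self]
    have := hdisc a
    omega
  obtain ⟨l, hl, hchain⟩ := aux_chain n (s.erase a) a hcard' hall' hb'
  refine ⟨a :: l, ?_, hchain⟩
  rw [← Multiset.cons_coe, hl]
  exact Multiset.cons_erase has
end

section
/- Let α be a type with decidable equality, s : Multiset α a nonempty multiset, and m : α a most frequent color of s (for all a : α, s.count a ≤ s.count m). Set n = Multiset.card s and k = max 1 (2 * s.count m - n) (natural-number truncated subtraction). Then: (i) there exists a valid packing of s into k bins, and (ii) every valid packing of s uses at least k bins. Hence k is the minimum number of bins for zero-weight Colored Bin Packing of s. -/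
open Multiset

private lemma two_mul_count_le {α : Type*} [DecidableEq α] (m : α) :
    ∀ (n : ℕ) (l : List α), l.length ≤ n → List.Chain' (· ≠ ·) l →
      2 * l.count m ≤ l.length + 1 := by
  intro n
  induction n with
  | zero =>
    intro l hl _
    rw [List.length_eq_zero_iff.mp (Nat.le_zero.mp hl)]
    simp
  | succ n ih =>
    intro l hl hc
    match l with
    | [] => simp
    | [a] =>
      simp only [List.count_cons, List.count_nil, List.length_cons, List.length_nil]
      split <;> omega
    | a :: b :: t =>
      obtain ⟨hab, hc'⟩ := List.isChain_cons_cons.mp hc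
      have hct : List.Chain' (· ≠ ·) t := hc'.tail
      have h1 : t.length ≤ n := by simp at hl; omega
      have h2 := ih t h1 hct
      simp only [List.count_cons, List.count_nil, List.length_cons]
      split_ifs with hA hB hB <;> try omega
      exact absurd ((beq_iff_eq.mp hB).trans (beq_iff_eq.mp hA).symm) hab

private lemma count_add_le_card {α : Type*} [DecidableEq α] (t : Multiset α) {a b : α}
    (hab : a ≠ b) : t.count a + t.count b ≤ Multiset.card t := by
  have hrep : Multiset.replicate (t.count b) b ≤ t :=
    (le_count_iff_replicate_le).mp le_rfl
  have h1 : (t - Multiset.replicate (t.count b) b).count a = t.count a := by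
    rw [count_sub, count_replicate]
    simp [Ne.symm hab, hab]
  have h2 : Multiset.card (t - Multiset.replicate (t.count b) b)
      = Multiset.card t - t.count b := by
    rw [Multiset.card_sub hrep, card_replicate]
  have h3 := Multiset.count_le_card a (t - Multiset.replicate (t.count b) b)
  have h4 := Multiset.count_le_card b t
  omega

private lemma exists_chain_forbidden {α : Type*} [DecidableEq α] :
    ∀ (n : ℕ) (t : Multiset α) (p : α), Multiset.card t ≤ n →
      2 * t.count p ≤ Multiset.card t →
      (∀ a, a ≠ p → 2 * t.count a ≤ Multiset.card t + 1) →
      ∃ l : List α, (l : Multiset α) = t ∧ List.Chain' (· ≠ ·) l ∧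
        ∀ x ∈ l.head?, x ≠ p := by
  intro n
  induction n with
  | zero =>
    intro t p hcard _ _
    have : t = 0 := by
      rw [← Multiset.card_eq_zero]; omega
    exact ⟨[], by simp [this], List.isChain_nil, by simp⟩
  | succ n ih =>
    intro t p hcard hp hoth
    by_cases ht : t = 0
    · exact ⟨[], by simp [ht], List.isChain_nil, by simp⟩
    have htpos : 0 < Multiset.card t := Multiset.card_pos.mpr ht
    by_cases hmaj : ∃ b, b ≠ p ∧ 2 * t.count b = Multiset.card t + 1
    · obtain ⟨b, hbp, hb⟩ := hmaj
      have hbt : b ∈ t := by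
        rw [← Multiset.count_pos]; omega
      have hcb : 1 ≤ t.count b := Multiset.count_pos.mpr hbt
      have hcard' : Multiset.card (t.erase b) = Multiset.card t - 1 :=
        Multiset.card_erase_of_mem hbt
      obtain ⟨l', hl1, hl2, hl3⟩ := ih (t.erase b) b (by omega)
        (by rw [Multiset.count_erase_self]; omega)
        (by
          intro a ha
          rw [Multiset.count_erase_of_ne ha]
          have := count_add_le_card t ha
          omega)
      refine ⟨b :: l', ?_, ?_, ?_⟩
      · rw [← Multiset.cons_coe, hl1, Multiset.cons_erase hbt]
      · simp only [List.Chain', List.isChain_cons]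
        exact ⟨fun y hy => (hl3 y hy).symm, hl2⟩
      · simpa using hbp
    · push_neg at hmaj
      have hex : ∃ a ∈ t, a ≠ p := by
        by_contra h'
        push_neg at h'
        have : t.count p = Multiset.card t :=
          Multiset.count_eq_card.mpr (fun x hx => (h' x hx).symm)
        omega
      obtain ⟨a, hat, hap⟩ := hex
      have hca : 1 ≤ t.count a := Multiset.count_pos.mpr hat
      have hcard' : Multiset.card (t.erase a) = Multiset.card t - 1 :=
        Multiset.card_erase_of_mem hat
      have hoa := hoth a hap
      obtain ⟨l', hl1, hl2, hl3⟩ := ih (t.erase a) a (by omega)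
        (by rw [Multiset.count_erase_self]; omega)
        (by
          intro b hba
          rw [Multiset.count_erase_of_ne hba]
          by_cases hbp : b = p
          · subst hbp; omega
          · have := hoth b hbp
            have := hmaj b hbp
            omega)
      refine ⟨a :: l', ?_, ?_, ?_⟩
      · rw [← Multiset.cons_coe, hl1, Multiset.cons_erase hat]
      · simp only [List.Chain', List.isChain_cons]
        exact ⟨fun y hy => (hl3 y hy).symm, hl2⟩
      · simpa using hap

private lemma exists_chain_of {α : Type*} [DecidableEq α] (t : Multiset α)
    (h : ∀ a, 2 * t.count a ≤ Multiset.card t + 1) :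
    ∃ l : List α, (l : Multiset α) = t ∧ List.Chain' (· ≠ ·) l := by
  by_cases ht : t = 0
  · exact ⟨[], by simp [ht], List.isChain_nil⟩
  have htpos : 0 < Multiset.card t := Multiset.card_pos.mpr ht
  by_cases hmaj : ∃ a, 2 * t.count a = Multiset.card t + 1
  · obtain ⟨a, ha⟩ := hmaj
    have hat : a ∈ t := by rw [← Multiset.count_pos]; omega
    have hca : 1 ≤ t.count a := Multiset.count_pos.mpr hat
    have hcard' : Multiset.card (t.erase a) = Multiset.card t - 1 :=
      Multiset.card_erase_of_mem hat
    obtain ⟨l', hl1, hl2, hl3⟩ := exists_chain_forbidden (Multiset.card (t.erase a))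
      (t.erase a) a le_rfl
      (by rw [Multiset.count_erase_self]; omega)
      (by
        intro b hba
        rw [Multiset.count_erase_of_ne hba]
        have := count_add_le_card t hba
        omega)
    refine ⟨a :: l', ?_, ?_⟩
    · rw [← Multiset.cons_coe, hl1, Multiset.cons_erase hat]
    · simp only [List.Chain', List.isChain_cons]
      exact ⟨fun y hy => (hl3 y hy).symm, hl2⟩
  · push_neg at hmaj
    obtain ⟨p, hpt⟩ := Multiset.exists_mem_of_ne_zero ht
    obtain ⟨l, hl1, hl2, _⟩ := exists_chain_forbidden (Multiset.card t) t p le_rfl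
      (by have := h p; have := hmaj p; omega)
      (fun a _ => h a)
    exact ⟨l, hl1, hl2⟩

private lemma lower_aux {α : Type*} [DecidableEq α] (m : α) :
    ∀ bins : List (List α),
      (∀ b ∈ bins, List.Chain' (· ≠ ·) b) →
      2 * ((bins.map fun b => (b : Multiset α)).sum).count m ≤
        Multiset.card ((bins.map fun b => (b : Multiset α)).sum) + bins.length := by
  intro bins
  induction bins with
  | nil => simp
  | cons b bs ih =>
    intro h
    have e1 : ((b :: bs).map fun x => (x : Multiset α)).sum
        = (b : Multiset α) + (bs.map fun x => (x : Multiset α)).sum := by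
      simp
    rw [e1, Multiset.count_add, Multiset.card_add, List.length_cons]
    have h1 := two_mul_count_le m b.length b le_rfl (h b (by simp))
    have h2 := ih (fun x hx => h x (by simp [hx]))
    have h3 : Multiset.card (b : Multiset α) = b.length := Multiset.coe_card b
    have h4 : (b : Multiset α).count m = b.count m := Multiset.coe_count m b
    omega

theorem alternate_zero_optimal {α : Type*} [DecidableEq α] (s : Multiset α)
    (hne : s ≠ 0) (m : α) (hmax : ∀ a : α, s.count a ≤ s.count m) :
    (∃ bins : List (List α),
        bins.length = max 1 (2 * s.count m - Multiset.card s) ∧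
        (bins.map (fun b => (b : Multiset α))).sum = s ∧
        ∀ b ∈ bins, List.Chain' (· ≠ ·) b) ∧
    (∀ bins : List (List α),
        (bins.map (fun b => (b : Multiset α))).sum = s →
        (∀ b ∈ bins, List.Chain' (· ≠ ·) b) →
        max 1 (2 * s.count m - Multiset.card s) ≤ bins.length) := by
  have hcn : s.count m ≤ Multiset.card s := Multiset.count_le_card m s
  constructor
  · rcases le_or_gt (2 * s.count m) (Multiset.card s + 1) with hle | hlt
    · obtain ⟨l, hl1, hl2⟩ := exists_chain_of s (fun a => by have := hmax a; omega)
      refine ⟨[l], ?_, by simpa using hl1, by simpa using hl2⟩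
      simp only [List.length_singleton]
      omega
    · have hd2 : 2 ≤ 2 * s.count m - Multiset.card s := by omega
      have hd1c : 2 * s.count m - Multiset.card s - 1 ≤ s.count m := by omega
      have hrep : Multiset.replicate (2 * s.count m - Multiset.card s - 1) m ≤ s :=
        le_count_iff_replicate_le.mp hd1c
      have hcard_t : Multiset.card (s - Multiset.replicate
          (2 * s.count m - Multiset.card s - 1) m)
          = Multiset.card s - (2 * s.count m - Multiset.card s - 1) := by
        rw [Multiset.card_sub hrep, card_replicate]
      have hcount_m : (s - Multiset.replicate
          (2 * s.count m - Multiset.card s - 1) m).count m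
          = s.count m - (2 * s.count m - Multiset.card s - 1) := by
        rw [count_sub, count_replicate, if_pos rfl]
      have hoth : ∀ a, a ≠ m → (s - Multiset.replicate
          (2 * s.count m - Multiset.card s - 1) m).count a
          ≤ Multiset.card s - s.count m := by
        intro a ha
        have h1 : (s - Multiset.replicate
            (2 * s.count m - Multiset.card s - 1) m).count a = s.count a := by
          rw [count_sub, count_replicate]
          simp [ha, Ne.symm ha]
        have h2 := count_add_le_card s ha
        omega
      obtain ⟨l, hl1, hl2⟩ := exists_chain_of
        (s - Multiset.replicate (2 * s.count m - Multiset.card s - 1) m) (by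
          intro a
          by_cases ham : a = m
          · subst ham; omega
          · have := hoth a ham; omega)
      refine ⟨List.replicate (2 * s.count m - Multiset.card s - 1) [m] ++ [l], ?_, ?_, ?_⟩
      · simp only [List.length_append, List.length_replicate, List.length_singleton]
        omega
      · have e1 : ((List.replicate (2 * s.count m - Multiset.card s - 1) [m] ++ [l]).map
            (fun b => (b : Multiset α))).sum
            = Multiset.replicate (2 * s.count m - Multiset.card s - 1) m
              + (l : Multiset α) := by
          simp
          generalize 2 * s.count m - Multiset.card s - 1 = k
          induction k with
          | zero => simp
          | succ n ih => simp [List.replicate_succ, Multiset.replicate_succ, ih]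
        rw [e1, hl1]
        exact add_tsub_cancel_of_le hrep
      · intro b hb
        rcases List.mem_append.mp hb with hb | hb
        · rw [List.eq_of_mem_replicate hb]
          exact List.isChain_singleton _
        · simp only [List.mem_singleton] at hb
          exact hb ▸ hl2
  · intro bins hsum hvalid
    have h1 := lower_aux m bins hvalid
    rw [hsum] at h1
    have hnil : bins ≠ [] := by
      rintro rfl
      simp at hsum
      exact hne hsum.symm
    have h2 : 1 ≤ bins.length := List.length_pos_iff.mpr hnil
    omega
end

section
/- Let α be a type with decidable equality, L ≥ 1 a natural number, s : Multiset α, and m : α a most frequent color of s (for all a : α, s.count a ≤ s.count m). Set n = Multiset.card s and suppose 2 * s.count m ≤ n (discrepancy at most 0). Then the minimum number of bins in a valid capacity-L packing of s equals ⌈n / L⌉ = (n + L - 1) / L: there is such a packing into (n + L - 1) / L bins, and every valid capacity-L packing uses at least (n + L - 1) / L bins. -/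
section
variable {α : Type*} [DecidableEq α]

lemma count_add_count_le_card (s : Multiset α) {a c : α} (h : a ≠ c) :
    s.count a + s.count c ≤ Multiset.card s := by
  induction s using Multiset.induction with
  | empty => simp
  | cons x t ih =>
    simp only [Multiset.count_cons, Multiset.card_cons]
    split_ifs with h1 h2 h2
    · exact absurd (h1.trans h2.symm) h
    all_goals omega

lemma exists_chain : ∀ (n : ℕ) (s : Multiset α) (b : α), Multiset.card s = n →
    (∀ a, 2 * s.count a ≤ n + 1) → 2 * s.count b ≤ n →
    ∃ l : List α, (l : Multiset α) = s ∧ l.Chain' (· ≠ ·) ∧ ∀ h ∈ l.head?, h ≠ b := by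
  intro n
  induction n using Nat.strong_induction_on with
  | _ n ih =>
    intro s b hcard h1 h2
    rcases n with _ | n
    · have hs : s = 0 := Multiset.card_eq_zero.mp hcard
      exact ⟨[], by simp [hs], List.isChain_nil, by simp⟩
    · have hbne : ∃ c ∈ s, c ≠ b := by
        by_contra hc
        push_neg at hc
        have : s.count b = Multiset.card s := by
          rw [Multiset.count_eq_card]
          intro x hx; exact (hc x hx).symm
        omega
      obtain ⟨c0, hc0s, hc0b⟩ := hbne
      have hF : c0 ∈ (s.filter (· ≠ b)).toFinset := by
        simp [Multiset.mem_filter, hc0s, hc0b]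
      obtain ⟨c, hcF, hcmax⟩ :=
        Finset.exists_max_image (s.filter (· ≠ b)).toFinset (fun a => s.count a) ⟨c0, hF⟩
      simp only [Multiset.mem_toFinset, Multiset.mem_filter] at hcF hcmax
      obtain ⟨hcs, hcb⟩ := hcF
      have hcsc : 1 ≤ s.count c := Multiset.one_le_count_iff_mem.mpr hcs
      set t := s.erase c with ht
      have hcardt : Multiset.card t = n := by
        simp [ht, Multiset.card_erase_of_mem hcs, hcard]
      have hcount_t : ∀ a, a ≠ c → t.count a = s.count a := fun a ha =>
        Multiset.count_erase_of_ne ha s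
      have hctc : t.count c = s.count c - 1 := by
        rw [ht, Multiset.count_erase_self]
      have h2' : 2 * t.count c ≤ n := by have := h1 c; omega
      have h1' : ∀ a, 2 * t.count a ≤ n + 1 := by
        intro a
        rcases eq_or_ne a c with rfl | hac
        · omega
        rw [hcount_t a hac]
        rcases eq_or_ne a b with rfl | hab
        · omega
        rcases Nat.eq_zero_or_pos (s.count a) with hz | hp
        · omega
        have haF : s.count a ≤ s.count c :=
          hcmax a ⟨Multiset.count_pos.mp hp, hab⟩
        have := count_add_count_le_card s hac
        omega
      obtain ⟨l', hl's, hl'chain, hl'head⟩ := ih n (Nat.lt_succ_self n) t c hcardt h1' h2'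
      refine ⟨c :: l', ?_, ?_, ?_⟩
      · show (c ::ₘ (l' : Multiset α)) = s
        rw [hl's, ht, Multiset.cons_erase hcs]
      · exact List.isChain_cons.mpr ⟨fun y hy => (hl'head y hy).symm, hl'chain⟩
      · intro h hh
        simp only [List.head?_cons, Option.mem_def, Option.some.injEq] at hh
        exact hh ▸ hcb

def chunk (L : ℕ) : List α → List (List α)
  | [] => []
  | x :: xs => ((x :: xs).take L) :: chunk L (xs.drop (L - 1))
termination_by l => l.length
decreasing_by simp [List.length_drop]

lemma chunk_join (L : ℕ) (hL : 1 ≤ L) (l : List α) : (chunk L l).flatten = l := by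
  induction l using chunk.induct L with
  | case1 => simp [chunk]
  | case2 x xs ih =>
    obtain ⟨k, rfl⟩ : ∃ k, L = k + 1 := ⟨L - 1, by omega⟩
    rw [chunk]
    simp only [List.flatten_cons, ih]
    simpa using List.take_append_drop (k + 1) (x :: xs)

lemma chunk_mem (L : ℕ) (l : List α) (hc : List.Chain' (· ≠ ·) l) :
    ∀ b ∈ chunk L l, b.length ≤ L ∧ List.Chain' (· ≠ ·) b := by
  induction l using chunk.induct L with
  | case1 => simp [chunk]
  | case2 x xs ih =>
    rw [chunk]
    intro b hb
    rcases List.mem_cons.mp hb with rfl | hb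
    · exact ⟨by simpa using List.length_take_le L (x :: xs), hc.take L⟩
    · exact ih ((hc.tail).drop (L - 1)) b hb

lemma chunk_length (L : ℕ) (hL : 1 ≤ L) (l : List α) :
    (chunk L l).length = (l.length + L - 1) / L := by
  induction l using chunk.induct L with
  | case1 =>
    show (chunk L ([] : List α)).length = (0 + L - 1) / L
    rw [chunk]
    exact (Nat.div_eq_of_lt (by omega)).symm
  | case2 x xs ih =>
    rw [chunk]
    simp only [List.length_cons, ih, List.length_drop]
    have he : xs.length + 1 + L - 1 = xs.length + L := by omega
    rw [he, Nat.add_div_right _ (by omega)]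
    rcases le_or_gt (L - 1) xs.length with h | h
    · have h1 : xs.length - (L - 1) + L - 1 = xs.length := by omega
      rw [h1]
    · have h0 : xs.length - (L - 1) = 0 := by omega
      rw [h0, Nat.div_eq_of_lt (by omega), Nat.div_eq_of_lt (by omega)]

lemma coeM_eq (bins : List (List α)) :
    (bins.map (fun b => (b : Multiset α))) = bins.map (fun b : List α => (b : Multiset α)) := by
  induction bins with
  | nil => rfl
  | cons b bs ih =>
      show (b : Multiset α) :: _ = _
      rw [List.map_cons]
      congr 1

lemma sum_map_coe (bins : List (List α)) :
    (bins.map (fun b : List α => (b : Multiset α))).sum = (bins.flatten : Multiset α) := by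
  induction bins with
  | nil => simp
  | cons b bs ih =>
      simp only [List.map_cons, List.sum_cons, List.flatten_cons, ih]
      exact (Multiset.coe_add b bs.flatten).symm

end

theorem alternate_unit_optimal_nonpos_discrepancy {α : Type*} [DecidableEq α]
    (L : ℕ) (hL : 1 ≤ L) (s : Multiset α) (m : α)
    (hmax : ∀ a : α, s.count a ≤ s.count m)
    (hdisc : 2 * s.count m ≤ Multiset.card s) :
    (∃ bins : List (List α),
        bins.length = (Multiset.card s + L - 1) / L ∧
        (bins.map (fun b => (b : Multiset α))).sum = s ∧
        ∀ b ∈ bins, b.length ≤ L ∧ List.Chain' (· ≠ ·) b) ∧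
    (∀ bins : List (List α),
        (bins.map (fun b => (b : Multiset α))).sum = s →
        (∀ b ∈ bins, b.length ≤ L ∧ List.Chain' (· ≠ ·) b) →
        (Multiset.card s + L - 1) / L ≤ bins.length) := by
  constructor
  · obtain ⟨l, hls, hlc, -⟩ := exists_chain (Multiset.card s) s m rfl
      (fun a => by have := hmax a; omega) hdisc
    have hlen : l.length = Multiset.card s := by
      rw [← hls]; simp
    refine ⟨chunk L l, ?_, ?_, chunk_mem L l hlc⟩
    · rw [chunk_length L hL l, hlen]
    · rw [coeM_eq, sum_map_coe, chunk_join L hL l, hls]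
  · intro bins hsum hb
    have hcard : Multiset.card s ≤ bins.length * L := by
      rw [← hsum, coeM_eq, sum_map_coe]
      simp only [Multiset.coe_card, List.length_flatten]
      calc (bins.map List.length).sum ≤ (bins.map List.length).length • L :=
            List.sum_le_card_nsmul _ _ (by
              intro x hx
              obtain ⟨b, hbm, rfl⟩ := List.mem_map.mp hx
              exact (hb b hbm).1)
        _ = bins.length * L := by simp [smul_eq_mul]
    calc (Multiset.card s + L - 1) / L ≤ (bins.length * L + (L - 1)) / L := by
          apply Nat.div_le_div_right; omega
      _ = bins.length := by
          rw [mul_comm, Nat.mul_add_div (by omega), Nat.div_eq_of_lt (by omega)]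
          omega
end

section
/- Let α be a type with decidable equality, L an odd natural number with L ≥ 3, s : Multiset α, and m : α. Set n = Multiset.card s, O = n - s.count m, and suppose D = s.count m - O > 0 and D ≤ (O + (L-1)/2 - 1) / ((L-1)/2) (i.e., D ≤ ⌈O / ⌊L/2⌋⌉). Then the minimum number of bins in a valid capacity-L packing of s equals D + ((n - D*L) + L - 1) / L (i.e., D + ⌈(n − D·L)/L⌉, with natural-number truncated subtraction). -/
set_option linter.unusedSectionVars false

namespace AUO

variable {α : Type*} [DecidableEq α]

lemma coeM_map (bins : List (List α)) :
    (bins.map (fun b => (b : Multiset α))) = bins.map (fun b : List α => Multiset.ofList b) := by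
  induction bins with
  | nil => rfl
  | cons b bins ih =>
      show Multiset.ofList b :: (bins.map (fun b => (b : Multiset α))) = _
      rw [ih, List.map_cons]

lemma ofList_eq (l : List α) : Multiset.ofList l = (↑l : Multiset α) := rfl

/-- interleave others with m: o₁ m o₂ m ... -/
def pairs (m : α) (l : List α) : List α := l.flatMap (fun o => [o, m])

@[simp] lemma pairs_nil (m : α) : pairs m ([] : List α) = [] := rfl
@[simp] lemma pairs_cons (m o : α) (l : List α) :
    pairs m (o :: l) = o :: m :: pairs m l := rfl

lemma pairs_length (m : α) (l : List α) : (pairs m l).length = 2 * l.length := by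
  induction l with
  | nil => simp
  | cons o l ih => simp [ih]; omega

lemma pairs_coe (m : α) (l : List α) :
    (↑(pairs m l) : Multiset α) = Multiset.replicate l.length m + ↑l := by
  induction l with
  | nil => simp
  | cons o l ih =>
      simp only [pairs_cons, List.length_cons, ← Multiset.cons_coe, ih,
        Multiset.replicate_succ, ← Multiset.singleton_add]
      abel

lemma pairs_chain' (m : α) (l : List α) (h : ∀ o ∈ l, o ≠ m) :
    List.Chain' (· ≠ ·) (m :: pairs m l) := by
  induction l with
  | nil => exact List.isChain_singleton m
  | cons o l ih =>
      have ho : o ≠ m := h o (by simp)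
      simp only [pairs_cons]
      show List.IsChain _ _
      rw [List.isChain_cons_cons, List.isChain_cons_cons]
      exact ⟨Ne.symm ho, ho, ih fun x hx => h x (by simp [hx])⟩

/-- split into chunks of size L -/
def chunks (L : ℕ) : List α → List (List α)
  | [] => []
  | a :: l => (a :: l.take (L - 1)) :: chunks L (l.drop (L - 1))
  termination_by l => l.length
  decreasing_by simp

@[simp] lemma chunks_nil (L : ℕ) : chunks L ([] : List α) = [] := by simp [chunks]
lemma chunks_cons (L : ℕ) (a : α) (l : List α) :
    chunks L (a :: l) = (a :: l.take (L - 1)) :: chunks L (l.drop (L - 1)) := by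
  simp [chunks]

lemma chunks_coe (L : ℕ) (l : List α) :
    (((chunks L l).map (fun b : List α => Multiset.ofList b)).sum) = (↑l : Multiset α) := by
  induction l using chunks.induct L with
  | case1 => simp
  | case2 a l ih =>
      rw [chunks_cons, List.map_cons, List.sum_cons, ih, ofList_eq, ← Multiset.cons_coe,
        ← Multiset.cons_coe, Multiset.cons_add, Multiset.coe_add, l.take_append_drop (L-1)]

lemma chunks_length (L : ℕ) (hL : 0 < L) (l : List α) :
    (chunks L l).length = (l.length + L - 1) / L := by
  induction l using chunks.induct L with
  | case1 => simp [Nat.div_eq_of_lt (by omega : L - 1 < L)]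
  | case2 a l ih =>
      rw [chunks_cons]
      simp only [List.length_cons, ih, List.length_drop]
      have h2 : (l.length + 1 + L - 1) = l.length + L := by omega
      rw [h2, Nat.add_div_right _ hL]
      rcases le_or_gt (L - 1) l.length with h | h
      · have : l.length - (L - 1) + L - 1 = l.length := by omega
        rw [this]
      · have h3 : l.length - (L - 1) + L - 1 = L - 1 := by omega
        rw [h3, Nat.div_eq_of_lt (by omega), Nat.div_eq_of_lt (by omega)]

lemma chunks_mem (L : ℕ) (hL : 0 < L) (l : List α) (R : α → α → Prop)
    (hc : List.Chain' R l) :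
    ∀ b ∈ chunks L l, b.length ≤ L ∧ List.Chain' R b := by
  induction l using chunks.induct L with
  | case1 => intro b hb; exact absurd hb (by simp)
  | case2 a l ih =>
      rw [chunks_cons]
      intro b hb
      rcases List.mem_cons.mp hb with rfl | hb
      · constructor
        · simp [List.length_take]; omega
        · exact hc.prefix ⟨l.drop (L-1), by simp⟩
      · exact ih (hc.tail.suffix (l.drop_suffix (L-1))) b hb

/-- the full construction -/
def buildAll (h : ℕ) (m : α) : ℕ → List α → List (List α)
  | 0, os => chunks (2 * h + 1) (pairs m os)
  | D + 1, os => (m :: pairs m (os.take h)) :: buildAll h m D (os.drop h)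

lemma buildAll_coe (h : ℕ) (m : α) (D : ℕ) (os : List α) :
    ((buildAll h m D os).map (fun b : List α => Multiset.ofList b)).sum
      = Multiset.replicate (D + os.length) m + ↑os := by
  induction D generalizing os with
  | zero => rw [buildAll, chunks_coe, pairs_coe]; simp
  | succ D ih =>
      rw [buildAll, List.map_cons, List.sum_cons, ih]
      have hlen : (os.take h).length + (os.drop h).length = os.length := by
        rw [List.length_take, List.length_drop]; omega
      have h1 : (Multiset.ofList (m :: pairs m (os.take h)))
          = Multiset.replicate ((os.take h).length + 1) m + ↑(os.take h) := by
        rw [ofList_eq, ← Multiset.cons_coe, pairs_coe]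
        rw [Nat.add_comm ((os.take h)).length 1, Multiset.replicate_add,
          Multiset.replicate_one, ← Multiset.singleton_add]
        exact (add_assoc _ _ _).symm
      rw [h1, add_add_add_comm, ← Multiset.replicate_add, Multiset.coe_add,
        os.take_append_drop h]
      congr 2
      omega

lemma buildAll_length (h : ℕ) (m : α) (D : ℕ) (os : List α) :
    (buildAll h m D os).length
      = D + (2 * (os.length - D * h) + (2 * h + 1) - 1) / (2 * h + 1) := by
  induction D generalizing os with
  | zero =>
      rw [buildAll, chunks_length _ (by omega), pairs_length]
      simp
  | succ D ih =>
      rw [buildAll]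
      simp only [List.length_cons, ih, List.length_drop]
      have : os.length - h - D * h = os.length - (D + 1) * h := by
        rw [Nat.sub_sub]; congr 1; ring
      rw [this]
      omega

lemma buildAll_mem (h : ℕ) (m : α) (D : ℕ) (os : List α) (hos : ∀ o ∈ os, o ≠ m) :
    ∀ b ∈ buildAll h m D os, b.length ≤ 2 * h + 1 ∧ List.Chain' (· ≠ ·) b := by
  induction D generalizing os with
  | zero =>
      rw [buildAll]
      exact chunks_mem _ (by omega) _ _ (pairs_chain' m os hos).tail
  | succ D ih =>
      rw [buildAll]
      intro b hb
      rcases List.mem_cons.mp hb with rfl | hb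
      · constructor
        · simp only [List.length_cons, pairs_length, List.length_take]
          omega
        · exact pairs_chain' m _ (fun o ho => hos o (List.mem_of_mem_take ho))
      · exact ih (os.drop h) (fun o ho => hos o (List.mem_of_mem_drop ho)) b hb

lemma sum_coe_card (bins : List (List α)) :
    Multiset.card ((bins.map (fun b : List α => Multiset.ofList b)).sum)
      = (bins.map List.length).sum := by
  induction bins with
  | nil => simp
  | cons b bins ih =>
      rw [List.map_cons, List.sum_cons, Multiset.card_add, ih, ofList_eq,
        Multiset.coe_card, List.map_cons, List.sum_cons]

lemma sum_coe_count (m : α) (bins : List (List α)) :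
    Multiset.count m ((bins.map (fun b : List α => Multiset.ofList b)).sum)
      = (bins.map (fun b => b.count m)).sum := by
  induction bins with
  | nil => simp
  | cons b bins ih =>
      rw [List.map_cons, List.sum_cons, Multiset.count_add, ih, ofList_eq,
        Multiset.coe_count, List.map_cons, List.sum_cons]

lemma chain_count (m : α) : ∀ l : List α, l.Chain' (· ≠ ·) →
    2 * l.count m ≤ l.length + 1
  | [] => fun _ => by simp
  | [a] => fun _ => by
      by_cases h : a = m
      · simp [h]
      · simp [List.count_cons, h]
  | a :: b :: t => fun hc => by
      have hab : a ≠ b := (List.isChain_cons_cons.mp hc).1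
      have h2 : (b :: t).Chain' (· ≠ ·) := (List.isChain_cons_cons.mp hc).2
      have ih2 := chain_count m t h2.tail
      have hcnt : (a :: b :: t).count m
          = t.count m + (if b = m then 1 else 0) + (if a = m then 1 else 0) := by
        simp [List.count_cons]
      by_cases ha : a = m
      · have hb : ¬ (b = m) := fun hbm => hab (ha.trans hbm.symm)
        rw [hcnt, if_pos ha, if_neg hb]
        simp only [List.length_cons]
        omega
      · rw [hcnt, if_neg ha]
        by_cases hb : b = m <;> [rw [if_pos hb]; rw [if_neg hb]] <;>
          simp only [List.length_cons] <;> omega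

lemma count_sum_ineq (m : α) (bins : List (List α))
    (h : ∀ b ∈ bins, List.Chain' (· ≠ ·) b) :
    2 * (bins.map (fun b => b.count m)).sum ≤ (bins.map List.length).sum + bins.length := by
  induction bins with
  | nil => simp
  | cons b bins ih =>
      have h1 := chain_count m b (h b (by simp))
      have h2 := ih (fun c hc => h c (by simp [hc]))
      simp only [List.map_cons, List.sum_cons, List.length_cons]
      omega

end AUO

theorem alternate_unit_optimal_odd_reducible {α : Type*} [DecidableEq α]
    (L : ℕ) (hodd : Odd L) (hL : 3 ≤ L) (s : Multiset α) (m : α)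
    (n O D : ℕ) (hn : n = Multiset.card s) (hO : O = n - s.count m)
    (hD : D = s.count m - O) (hDpos : 0 < D)
    (hred : D ≤ (O + (L - 1) / 2 - 1) / ((L - 1) / 2)) :
    (∃ bins : List (List α),
        bins.length = D + ((n - D * L) + L - 1) / L ∧
        (bins.map (fun b => (b : Multiset α))).sum = s ∧
        ∀ b ∈ bins, b.length ≤ L ∧ List.Chain' (· ≠ ·) b) ∧
    (∀ bins : List (List α),
        (bins.map (fun b => (b : Multiset α))).sum = s →
        (∀ b ∈ bins, b.length ≤ L ∧ List.Chain' (· ≠ ·) b) →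
        D + ((n - D * L) + L - 1) / L ≤ bins.length) := by
  clear hred
  obtain ⟨h, hh⟩ : ∃ h, L = 2 * h + 1 := by
    obtain ⟨t, ht⟩ := hodd; exact ⟨t, by omega⟩
  set M := s.count m with hM
  have hMn : M ≤ n := hn ▸ Multiset.count_le_card m s
  have hOn : O + M = n := by omega
  have hDMO : M = O + D := by omega
  set os : List α := (s.filter (· ≠ m)).toList with hos
  have hosne : ∀ o ∈ os, o ≠ m := by
    intro o ho
    have : o ∈ s.filter (· ≠ m) := by
      rw [← Multiset.mem_toList]; exact ho
    exact (Multiset.mem_filter.mp this).2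
  have hsplit : Multiset.replicate M m + (↑os : Multiset α) = s := by
    rw [hos, Multiset.coe_toList, hM, ← Multiset.filter_eq' s m]
    exact Multiset.filter_add_not _ s
  have hoslen : os.length = O := by
    have hc : Multiset.card (Multiset.replicate M m + (↑os : Multiset α)) = n := by
      rw [hsplit, hn]
    simp at hc
    omega
  have hsub : 2 * (O - D * h) = n - D * L := by
    have hDL : D * L = 2 * (D * h) + D := by subst hh; ring
    omega
  constructor
  · refine ⟨AUO.buildAll h m D os, ?_, ?_, ?_⟩
    · rw [AUO.buildAll_length, hoslen, hsub, hh]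
    · rw [AUO.coeM_map, AUO.buildAll_coe, hoslen, show D + O = M by omega]
      exact hsplit
    · rw [hh]; exact AUO.buildAll_mem h m D os hosne
  · intro bins hsum hvalid
    rw [AUO.coeM_map] at hsum
    set k := bins.length with hk
    have hcard : (bins.map List.length).sum = n := by
      rw [← AUO.sum_coe_card, hsum, hn]
    have hcnt : (bins.map (fun b => b.count m)).sum = M := by
      rw [← AUO.sum_coe_count, hsum]
    have hnk : n ≤ k * L := by
      rw [← hcard]
      have := List.sum_le_card_nsmul (bins.map List.length) L
        (by intro x hx; obtain ⟨b, hb, rfl⟩ := List.mem_map.mp hx; exact (hvalid b hb).1)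
      simpa using this
    have h2M : 2 * M ≤ n + k := by
      rw [← hcnt, ← hcard]
      exact AUO.count_sum_ineq m bins (fun b hb => (hvalid b hb).2)
    have hkD : D ≤ k := by omega
    rcases le_or_gt n (D * L) with hcase | hcase
    · have h0 : n - D * L = 0 := by omega
      rw [h0, Nat.zero_add, Nat.div_eq_of_lt (by omega : L - 1 < L)]
      omega
    · have hkL : k * L = D * L + (k - D) * L := by
        rw [← Nat.add_mul]; congr 1; omega
      have hdiv : (n - D * L + L - 1) / L ≤ k - D := by
        have hlt : (n - D * L + L - 1) / L < (k - D) + 1 := by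
          rw [Nat.div_lt_iff_lt_mul (by omega : 0 < L), Nat.add_mul, Nat.one_mul]
          omega
        omega
      omega
end

section
/- Let α be a type with decidable equality, L an odd natural number with L ≥ 3, s : Multiset α, and m : α. Set n = Multiset.card s, O = n - s.count m, and suppose D = s.count m - O > 0 and D > (O + (L-1)/2 - 1) / ((L-1)/2) (i.e., D > ⌈O / ⌊L/2⌋⌉). Then the minimum number of bins in a valid capacity-L packing of s equals D. -/
set_option linter.unusedSectionVars false
set_option linter.deprecated false

namespace AltUnitAux

variable {α : Type*} [DecidableEq α]

/-- Split a list into `d` chunks of size at most `k`. -/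
def mkChunks (k : ℕ) : ℕ → List α → List (List α)
  | 0, _ => []
  | d+1, l => l.take k :: mkChunks k d (l.drop k)

lemma mkChunks_length (k d : ℕ) (l : List α) : (mkChunks k d l).length = d := by
  induction d generalizing l with
  | zero => rfl
  | succ d ih => simp [mkChunks, ih]

lemma mkChunks_flatten (k d : ℕ) (l : List α) (h : l.length ≤ d * k) :
    (mkChunks k d l).flatten = l := by
  induction d generalizing l with
  | zero =>
    simp only [Nat.zero_mul, Nat.le_zero, List.length_eq_zero_iff] at h
    simp [mkChunks, h]
  | succ d ih =>
    have h' : (l.drop k).length ≤ d * k := by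
      simp only [List.length_drop]
      have : (d+1) * k = d * k + k := by ring
      omega
    simp [mkChunks, ih _ h']

lemma mkChunks_len_le (k d : ℕ) (l : List α) :
    ∀ c ∈ mkChunks k d l, c.length ≤ k := by
  induction d generalizing l with
  | zero => intro c hc; simp [mkChunks] at hc
  | succ d ih =>
    intro c hc
    simp only [mkChunks, List.mem_cons] at hc
    rcases hc with rfl | hc
    · simp [List.length_take]
    · exact ih _ c hc

lemma mkChunks_mem (k d : ℕ) (l : List α) :
    ∀ c ∈ mkChunks k d l, ∀ x ∈ c, x ∈ l := by
  induction d generalizing l with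
  | zero => intro c hc; simp [mkChunks] at hc
  | succ d ih =>
    intro c hc x hx
    simp only [mkChunks, List.mem_cons] at hc
    rcases hc with rfl | hc
    · exact List.mem_of_mem_take hx
    · exact List.mem_of_mem_drop (ih _ c hc x hx)

/-- Interleave `m` with a chunk: `mkBin m [x₁,…,xₜ] = [m, x₁, m, x₂, …, xₜ, m]`. -/
def mkBin (m : α) : List α → List α
  | [] => [m]
  | x :: t => m :: x :: mkBin m t

lemma mkBin_length (m : α) (c : List α) : (mkBin m c).length = 2 * c.length + 1 := by
  induction c with
  | nil => rfl
  | cons x t ih => simp [mkBin, ih]; ring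

lemma mkBin_coe (m : α) (c : List α) :
    (mkBin m c : Multiset α) = (c : Multiset α) + Multiset.replicate (c.length + 1) m := by
  induction c with
  | nil => simp [mkBin]
  | cons x t ih =>
    show (m ::ₘ x ::ₘ (mkBin m t : Multiset α)) = _
    rw [ih, ← Multiset.cons_coe, List.length_cons, Multiset.replicate_succ,
      Multiset.cons_add, Multiset.add_cons, Multiset.cons_swap]
    simp [Multiset.replicate_succ, Multiset.add_cons]

lemma mkBin_chain' (m : α) :
    ∀ c : List α, (∀ x ∈ c, x ≠ m) →
      List.Chain' (· ≠ ·) (mkBin m c) ∧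
      ∀ y, y ≠ m → List.Chain' (· ≠ ·) (y :: mkBin m c)
  | [] => by
    intro _
    constructor
    · simp [mkBin, List.Chain']
    · intro y hy; simp [mkBin, hy, List.Chain']
  | x :: t => fun h => by
    have hx : x ≠ m := h x (by simp)
    have ih := mkBin_chain' m t (fun z hz => h z (by simp [hz]))
    have h1 : List.Chain' (· ≠ ·) (x :: mkBin m t) := ih.2 x hx
    have h2 : List.Chain' (· ≠ ·) (mkBin m (x :: t)) := by
      show List.Chain' (· ≠ ·) (m :: x :: mkBin m t)
      rw [List.Chain', List.isChain_cons_cons]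
      exact ⟨Ne.symm hx, h1⟩
    refine ⟨h2, fun y hy => ?_⟩
    show List.Chain' (· ≠ ·) (y :: m :: x :: mkBin m t)
    rw [List.Chain', List.isChain_cons_cons]
    exact ⟨hy, h2⟩

lemma sum_map_mkBin (m : α) (cs : List (List α)) :
    ((cs.map (mkBin m)).map (fun b => (b : Multiset α))).sum
      = (cs.flatten : Multiset α) + Multiset.replicate (cs.flatten.length + cs.length) m := by
  induction cs with
  | nil => simp
  | cons c cs ih =>
    have e1 : ((((c :: cs).map (mkBin m)).map (fun b => (b : Multiset α)))).sum
        = (mkBin m c : Multiset α) + ((cs.map (mkBin m)).map (fun b => (b : Multiset α))).sum := by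
      simp
    rw [e1, ih, mkBin_coe, List.flatten_cons]
    have harg : (c ++ cs.flatten).length + (c :: cs).length
        = (c.length + 1) + (cs.flatten.length + cs.length) := by
      simp [List.length_append]; omega
    have hco : ((c ++ cs.flatten : List α) : Multiset α)
        = (c : Multiset α) + (cs.flatten : Multiset α) := by simp
    rw [harg, hco]
    simp only [Multiset.replicate_add]
    abel

lemma two_mul_count_le (a : α) :
    ∀ l : List α, List.Chain' (· ≠ ·) l → 2 * l.count a ≤ l.length + 1
  | [], _ => by simp
  | [x], _ => by
    simp only [List.count_cons, List.count_nil, List.length_cons, List.length_nil]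
    split_ifs <;> omega
  | x :: y :: t, h => by
    have h1 : x ≠ y := (List.isChain_cons_cons.mp h).1
    have htail : List.Chain' (· ≠ ·) (y :: t) := (List.isChain_cons_cons.mp h).2
    have h2 := two_mul_count_le a t htail.tail
    simp only [List.count_cons, List.length_cons, beq_iff_eq]
    by_cases hx : x = a <;> by_cases hy : y = a
    · exact absurd (hx.trans hy.symm) h1
    · simp only [if_pos hx, if_neg hy]; omega
    · simp only [if_neg hx, if_pos hy]; omega
    · simp only [if_neg hx, if_neg hy]; omega

lemma sum_count_bound (m : α) :
    ∀ bins : List (List α), (∀ b ∈ bins, List.Chain' (· ≠ ·) b) →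
      2 * Multiset.count m (bins.map (fun b => (b : Multiset α))).sum
        ≤ Multiset.card (bins.map (fun b => (b : Multiset α))).sum + bins.length := by
  intro bins
  induction bins with
  | nil => simp
  | cons b bins ih =>
    intro h
    have hb := two_mul_count_le m b (h b (by simp))
    have hrest := ih (fun c hc => h c (by simp [hc]))
    have e1 : (((b :: bins).map (fun b => (b : Multiset α))).sum)
        = (b : Multiset α) + (bins.map (fun b => (b : Multiset α))).sum := by
      simp
    have hc1 : Multiset.count m (b : Multiset α) = b.count m := Multiset.coe_count m b
    have hc2 : Multiset.card (b : Multiset α) = b.length := Multiset.coe_card b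
    rw [e1, Multiset.count_add, Multiset.card_add, List.length_cons, hc1, hc2]
    omega

end AltUnitAux

open AltUnitAux in
theorem alternate_unit_optimal_odd_irreducible {α : Type*} [DecidableEq α]
    (L : ℕ) (hodd : Odd L) (hL : 3 ≤ L) (s : Multiset α) (m : α)
    (n O D : ℕ) (hn : n = Multiset.card s) (hO : O = n - s.count m)
    (hD : D = s.count m - O) (hDpos : 0 < D)
    (hirr : D > (O + (L - 1) / 2 - 1) / ((L - 1) / 2)) :
    (∃ bins : List (List α),
        bins.length = D ∧
        (bins.map (fun b => (b : Multiset α))).sum = s ∧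
        ∀ b ∈ bins, b.length ≤ L ∧ List.Chain' (· ≠ ·) b) ∧
    (∀ bins : List (List α),
        (bins.map (fun b => (b : Multiset α))).sum = s →
        (∀ b ∈ bins, b.length ≤ L ∧ List.Chain' (· ≠ ·) b) →
        D ≤ bins.length) := by
  obtain ⟨j, hj⟩ := hodd
  set k : ℕ := (L - 1) / 2 with hk
  have hkj : k = j := by omega
  have hLk : L = 2 * k + 1 := by omega
  have hkpos : 0 < k := by omega
  have hCle : s.count m ≤ n := hn ▸ Multiset.count_le_card m s
  have hOD : O + D = s.count m := by omega
  -- O ≤ D * k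
  have hODk : O ≤ D * k := by
    by_contra hcon
    push_neg at hcon
    have h1 : (D - 1) * k + 1 ≤ O := by
      nlinarith [Nat.sub_add_cancel hDpos]
    have h2 : D ≤ (O + k - 1) / k := by
      have hmul : D * k ≤ O + k - 1 := by
        have h3 : (D - 1) * k + k = D * k := by
          have h4 := Nat.sub_add_cancel hDpos
          nlinarith
        omega
      exact (Nat.le_div_iff_mul_le hkpos).mpr hmul
    omega
  constructor
  · -- existence
    set others : List α := (s.filter (· ≠ m)).toList with hothers
    have hothersCard : others.length = O := by
      have h1 : Multiset.card (s.filter (· ≠ m)) = n - s.count m := by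
        have hfl := Multiset.filter_add_not (· = m) s
        have hc : Multiset.card (s.filter (· = m)) = s.count m := by
          rw [Multiset.filter_eq']; simp
        have hcc : Multiset.card (s.filter (· = m)) +
            Multiset.card (s.filter (fun a => ¬ a = m)) = Multiset.card s := by
          rw [← Multiset.card_add, hfl]
        simp only [ne_eq]
        omega
      simpa [hothers, hO] using h1
    have hothersmem : ∀ x ∈ others, x ≠ m := by
      intro x hx
      have : x ∈ s.filter (· ≠ m) := by rwa [hothers, Multiset.mem_toList] at hx
      exact (Multiset.mem_filter.mp this).2
    refine ⟨(mkChunks k D others).map (mkBin m), ?_, ?_, ?_⟩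
    · simp [mkChunks_length]
    · rw [sum_map_mkBin, mkChunks_flatten k D others (by omega), mkChunks_length,
        hothersCard, hOD, hothers, Multiset.coe_toList]
      rw [← Multiset.filter_eq' s m]
      have hfl := Multiset.filter_add_not (fun a => a = m) s
      rw [add_comm]
      simpa [ne_eq] using hfl
    · intro b hb
      simp only [List.mem_map] at hb
      obtain ⟨c, hc, rfl⟩ := hb
      constructor
      · rw [mkBin_length]
        have := mkChunks_len_le k D others c hc
        omega
      · exact (mkBin_chain' m c (fun x hx => hothersmem x (mkChunks_mem k D others c hc x hx))).1
  · -- lower bound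
    intro bins hsum hvalid
    have hbd := sum_count_bound m bins (fun b hb => (hvalid b hb).2)
    rw [hsum] at hbd
    omega
end

section
/- Let α be a type with decidable equality, L an even natural number with L ≥ 2, s : Multiset α, and m : α. Set n = Multiset.card s and suppose D = s.count m - (n - s.count m) > 0. Then the minimum number of bins in a valid capacity-L packing of s equals max D ((2 * s.count m + L - 1) / L), i.e., the maximum of the discrepancy D and ⌈2·s.count m / L⌉: there exists such a packing using that many bins, and no valid capacity-L packing uses fewer. -/
section CBP
variable {α : Type*} [DecidableEq α]

/-- a bin: m x1 m x2 ... m x_b, plus trailing m if flagged -/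
def mkbinCBP (m : α) (flag : Bool) (xs : List α) : List α :=
  (xs.flatMap fun x => [m, x]) ++ if flag then [m] else []

lemma mkbinCBP_cons (m : α) (flag : Bool) (x : α) (xs : List α) :
    mkbinCBP m flag (x :: xs) = m :: x :: mkbinCBP m flag xs := by
  simp [mkbinCBP]

lemma mkbinCBP_length (m : α) (flag : Bool) (xs : List α) :
    (mkbinCBP m flag xs).length = 2 * xs.length + (if flag then 1 else 0) := by
  induction xs with
  | nil => cases flag <;> simp [mkbinCBP]
  | cons x xs ih => rw [mkbinCBP_cons]; simp only [List.length_cons, ih]; ring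

lemma mkbinCBP_head (m : α) (flag : Bool) (xs : List α) :
    ∀ a ∈ (mkbinCBP m flag xs).head?, a = m := by
  cases xs <;> cases flag <;> simp [mkbinCBP]

lemma mkbinCBP_chain (m : α) (flag : Bool) :
    ∀ xs : List α, (∀ x ∈ xs, x ≠ m) → List.Chain' (· ≠ ·) (mkbinCBP m flag xs)
  | [], _ => by cases flag <;> simp [mkbinCBP, List.Chain']
  | x :: xs, h => by
    have hx : x ≠ m := h x (by simp)
    have ih := mkbinCBP_chain m flag xs (fun y hy => h y (List.mem_cons_of_mem _ hy))
    rw [mkbinCBP_cons]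
    refine List.isChain_cons_cons.mpr ⟨fun e => hx e.symm, ?_⟩
    refine List.isChain_cons.mpr ⟨?_, ih⟩
    intro a ha
    rw [mkbinCBP_head m flag xs a ha]
    exact hx

lemma mkbinCBP_coe (m : α) (flag : Bool) (xs : List α) :
    ((mkbinCBP m flag xs : List α) : Multiset α)
      = (xs : Multiset α) + (xs.length + if flag then 1 else 0) • ({m} : Multiset α) := by
  induction xs with
  | nil => cases flag <;> simp [mkbinCBP]
  | cons x xs ih =>
    rw [mkbinCBP_cons]
    have h1 : ((m :: x :: mkbinCBP m flag xs : List α) : Multiset α)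
        = (mkbinCBP m flag xs : Multiset α) + {m} + {x} := by
      rw [← Multiset.cons_coe, ← Multiset.cons_coe, ← Multiset.singleton_add, ← Multiset.singleton_add]
      abel
    have h2 : ((x :: xs : List α) : Multiset α) = {x} + (xs : Multiset α) := by
      rw [← Multiset.cons_coe, ← Multiset.singleton_add]
    rw [h1, ih, h2]
    simp only [List.length_cons, add_smul, one_smul]
    abel

end CBP

section CBP2
variable {α : Type*} [DecidableEq α]

lemma sumCoe_cons (b : List α) (bs : List (List α)) :
    (((b :: bs).map (fun x => (x : Multiset α))).sum : Multiset α)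
      = (b : Multiset α) + ((bs.map (fun x => (x : Multiset α))).sum) := rfl

lemma sumCoe_nil :
    ((([] : List (List α)).map (fun x => (x : Multiset α))).sum : Multiset α) = 0 := rfl

def mkbinsCBP (m : α) (q : ℕ) : ℕ → ℕ → List α → List (List α)
  | 0, _, _ => []
  | N+1, 0, xs => mkbinCBP m false (xs.take q) :: mkbinsCBP m q N 0 (xs.drop q)
  | N+1, d+1, xs => mkbinCBP m true (xs.take (q-1)) :: mkbinsCBP m q N d (xs.drop (q-1))

lemma mkbinsCBP_length (m : α) (q : ℕ) : ∀ (N d : ℕ) (xs : List α),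
    (mkbinsCBP m q N d xs).length = N
  | 0, _, _ => rfl
  | N+1, 0, xs => by rw [mkbinsCBP]; simp [mkbinsCBP_length m q N 0]
  | N+1, d+1, xs => by rw [mkbinsCBP]; simp [mkbinsCBP_length m q N d]

lemma mkbinsCBP_valid (m : α) (q : ℕ) (hq : 1 ≤ q) : ∀ (N d : ℕ) (xs : List α),
    (∀ x ∈ xs, x ≠ m) →
    ∀ b ∈ mkbinsCBP m q N d xs, b.length ≤ 2 * q ∧ List.Chain' (· ≠ ·) b
  | 0, _, _, _ => by simp [mkbinsCBP]
  | N+1, 0, xs, h => by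
    rw [mkbinsCBP]
    intro b hb
    rcases List.mem_cons.mp hb with rfl | hb
    · constructor
      · rw [mkbinCBP_length]
        have := List.length_take_le q xs
        try norm_num
        try omega
      · exact mkbinCBP_chain m false _ (fun x hx => h x (List.mem_of_mem_take hx))
    · exact mkbinsCBP_valid m q hq N 0 _ (fun x hx => h x (List.mem_of_mem_drop hx)) b hb
  | N+1, d+1, xs, h => by
    rw [mkbinsCBP]
    intro b hb
    rcases List.mem_cons.mp hb with rfl | hb
    · constructor
      · rw [mkbinCBP_length]
        have := List.length_take_le (q-1) xs
        try norm_num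
        try omega
      · exact mkbinCBP_chain m true _ (fun x hx => h x (List.mem_of_mem_take hx))
    · exact mkbinsCBP_valid m q hq N d _ (fun x hx => h x (List.mem_of_mem_drop hx)) b hb

lemma mkbinsCBP_sum (m : α) (q : ℕ) : ∀ (N d : ℕ) (xs : List α), d ≤ N →
    xs.length ≤ d * (q-1) + (N-d) * q →
    ((mkbinsCBP m q N d xs).map (fun b => (b : Multiset α))).sum
      = (xs : Multiset α) + (xs.length + d) • ({m} : Multiset α)
  | 0, d, xs, hd, hcap => by
    interval_cases d
    simp at hcap
    subst hcap
    show (0 : Multiset α) = _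
    simp
  | N+1, 0, xs, hd, hcap => by
    rw [mkbinsCBP]
    have hcap' : (xs.drop q).length ≤ 0 * (q-1) + (N-0) * q := by
      rw [List.length_drop]
      have e : (N+1-0) * q = N * q + q := by rw [Nat.sub_zero, Nat.succ_mul]
      rw [e] at hcap
      simp only [Nat.zero_mul, Nat.sub_zero, Nat.zero_add]
      omega
    have ih := mkbinsCBP_sum m q N 0 (xs.drop q) (Nat.zero_le N) hcap'
    rw [sumCoe_cons, ih, mkbinCBP_coe]
    have key : ((xs.take q : List α) : Multiset α) + ((xs.drop q : List α) : Multiset α)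
        = (xs : Multiset α) := by
      have h := congrArg (fun l : List α => (l : Multiset α)) (List.take_append_drop q xs)
      simpa using h
    have hlen : (xs.take q).length + (xs.drop q).length = xs.length := by
      rw [List.length_take, List.length_drop]; omega
    simp [add_smul]
    rw [← key]
    have hsm : xs.length • ({m} : Multiset α) = (q ⊓ xs.length) • {m} + (xs.length - q) • {m} := by
      rw [← add_smul]
      congr 1
      omega
    rw [hsm]
    abel
  | N+1, d+1, xs, hd, hcap => by
    rw [mkbinsCBP]
    have hd' : d ≤ N := Nat.succ_le_succ_iff.mp hd
    have hcap' : (xs.drop (q-1)).length ≤ d * (q-1) + (N-d) * q := by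
      rw [List.length_drop]
      have e : (d+1) * (q-1) = d * (q-1) + (q-1) := Nat.succ_mul _ _
      have e2 : N + 1 - (d+1) = N - d := Nat.succ_sub_succ _ _
      rw [e, e2] at hcap
      omega
    have ih := mkbinsCBP_sum m q N d (xs.drop (q-1)) hd' hcap'
    rw [sumCoe_cons, ih, mkbinCBP_coe]
    have key : ((xs.take (q-1) : List α) : Multiset α) + ((xs.drop (q-1) : List α) : Multiset α)
        = (xs : Multiset α) := by
      have h := congrArg (fun l : List α => (l : Multiset α)) (List.take_append_drop (q-1) xs)
      simpa using h
    have hlen : (xs.take (q-1)).length + (xs.drop (q-1)).length = xs.length := by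
      rw [List.length_take, List.length_drop]; omega
    simp [add_smul]
    rw [← key]
    have hsm : xs.length • ({m} : Multiset α) = ((q-1) ⊓ xs.length) • {m} + (xs.length - (q-1)) • {m} := by
      rw [← add_smul]
      congr 1
      omega
    rw [hsm]
    abel

end CBP2

section CBP3
variable {α : Type*} [DecidableEq α]

lemma chain_two_count (m : α) : ∀ l : List α, List.Chain' (· ≠ ·) l →
    2 * l.count m ≤ l.length + 1
  | [], _ => by simp
  | [a], _ => by by_cases h : a = m <;> simp [List.count_cons, h]
  | a :: b :: l, h => by
    have hab : a ≠ b := (List.isChain_cons_cons.mp h).1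
    have h2 : List.Chain' (· ≠ ·) (b :: l) := (List.isChain_cons_cons.mp h).2
    have ih := chain_two_count m l h2.tail
    have hcnt : (a :: b :: l).count m ≤ l.count m + 1 := by
      by_cases ha : a = m <;> by_cases hb : b = m
      · exact absurd (ha.trans hb.symm) hab
      all_goals simp [List.count_cons, ha, hb]
    simp only [List.length_cons]
    omega

lemma lower_auxCBP (m : α) (L q : ℕ) (hLq : L = q + q) : ∀ bins : List (List α),
    (∀ b ∈ bins, b.length ≤ L ∧ List.Chain' (· ≠ ·) b) →
    2 * Multiset.count m ((bins.map (fun b => (b : Multiset α))).sum)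
        ≤ Multiset.card ((bins.map (fun b => (b : Multiset α))).sum) + bins.length ∧
    2 * Multiset.count m ((bins.map (fun b => (b : Multiset α))).sum) ≤ bins.length * L
  | [], _ => by rw [sumCoe_nil]; simp
  | b :: bins, h => by
    have hb := h b List.mem_cons_self
    have ih := lower_auxCBP m L q hLq bins (fun x hx => h x (List.mem_cons_of_mem _ hx))
    have hc := chain_two_count m b hb.2
    have hbL : 2 * b.count m ≤ L := by
      have := hb.1
      omega
    rw [sumCoe_cons]
    simp only [Multiset.count_add, Multiset.card_add, Multiset.coe_count, Multiset.coe_card,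
      List.length_cons]
    obtain ⟨ih1, ih2⟩ := ih
    constructor
    · have := hb.1
      omega
    · have e : (bins.length + 1) * L = bins.length * L + L := Nat.succ_mul _ _
      rw [e]
      omega

lemma capCBP (D N q k r : ℕ) (hDN : D ≤ N) (hq : 1 ≤ q) (hk : k ≤ N * q)
    (hrk : r + D = k) : r ≤ D * (q - 1) + (N - D) * q := by
  have e : D * (q - 1) + (N - D) * q + D = N * q := by
    obtain ⟨q', rfl⟩ : ∃ q', q = q' + 1 := ⟨q - 1, by omega⟩
    obtain ⟨E, rfl⟩ : ∃ E, N = D + E := ⟨N - D, by omega⟩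
    simp only [Nat.add_sub_cancel, Nat.add_sub_cancel_left]
    ring
  omega

end CBP3

theorem alternate_unit_optimal_even_pos_discrepancy {α : Type*} [DecidableEq α]
    (L : ℕ) (heven : Even L) (hL : 2 ≤ L) (s : Multiset α) (m : α)
    (D : ℕ) (hD : D = s.count m - (Multiset.card s - s.count m)) (hDpos : 0 < D) :
    (∃ bins : List (List α),
        bins.length = max D ((2 * s.count m + L - 1) / L) ∧
        (bins.map (fun b => (b : Multiset α))).sum = s ∧
        ∀ b ∈ bins, b.length ≤ L ∧ List.Chain' (· ≠ ·) b) ∧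
    (∀ bins : List (List α),
        (bins.map (fun b => (b : Multiset α))).sum = s →
        (∀ b ∈ bins, b.length ≤ L ∧ List.Chain' (· ≠ ·) b) →
        max D ((2 * s.count m + L - 1) / L) ≤ bins.length) := by
  obtain ⟨q, hq⟩ := heven
  have hLpos : 0 < L := by omega
  have hq1 : 1 ≤ q := by omega
  have hkn : s.count m ≤ Multiset.card s := Multiset.count_le_card m s
  set k := s.count m with hk
  set n := Multiset.card s with hn
  have hkr : n - k < k := by omega
  set N := max D ((2 * k + L - 1) / L) with hN
  have hcN : (2 * k + L - 1) / L ≤ N := le_max_right _ _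
  have hDN : D ≤ N := le_max_left _ _
  -- k ≤ N * q
  have hkNq : k ≤ N * q := by
    have hdiv : L * ((2 * k + L - 1) / L) + (2 * k + L - 1) % L = 2 * k + L - 1 :=
      Nat.div_add_mod _ _
    have hmod : (2 * k + L - 1) % L < L := Nat.mod_lt _ hLpos
    have hmul : L * ((2 * k + L - 1) / L) ≤ L * N := Nat.mul_le_mul_left L hcN
    have h2 : L * N = N * q + N * q := by rw [hq]; ring
    omega
  -- split s
  set t := s.filter (fun x => ¬ x = m) with ht
  set os := t.toList with hos
  have hts : (os : Multiset α) = t := Multiset.coe_toList t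
  have hosm : ∀ x ∈ os, x ≠ m := by
    intro x hx
    have hxt : x ∈ t := by rw [hos] at hx; exact (Multiset.mem_toList).mp hx
    exact (Multiset.mem_filter.mp hxt).2
  have hsplit : s.filter (fun x => x = m) + t = s := Multiset.filter_add_not _ s
  have hfeq : s.filter (fun x => x = m) = Multiset.replicate k m := Multiset.filter_eq' s m
  have hr : os.length = n - k := by
    have hct : Multiset.card t = n - k := by
      have hcc := congrArg Multiset.card hsplit
      rw [Multiset.card_add, hfeq, Multiset.card_replicate] at hcc
      omega
    rw [hos, Multiset.length_toList]
    exact hct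
  have hs : (os : Multiset α) + k • ({m} : Multiset α) = s := by
    rw [hts, Multiset.nsmul_singleton, add_comm, ← hfeq]
    exact hsplit
  have hrk : os.length + D = k := by omega
  have hcap : os.length ≤ D * (q - 1) + (N - D) * q := capCBP D N q k _ hDN hq1 hkNq hrk
  constructor
  · refine ⟨mkbinsCBP m q N D os, mkbinsCBP_length m q N D os, ?_, ?_⟩
    · rw [mkbinsCBP_sum m q N D os hDN hcap, hrk, hs]
    · intro b hb
      have := mkbinsCBP_valid m q hq1 N D os hosm b hb
      rwa [show 2 * q = L by omega] at this
  · intro bins hsum hvalid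
    obtain ⟨h1, h2⟩ := lower_auxCBP m L q hq bins hvalid
    rw [hsum] at h1 h2
    rw [← hk] at h1 h2
    rw [← hn] at h1
    have hDle : D ≤ bins.length := by omega
    have hceil : (2 * k + L - 1) / L ≤ bins.length := by
      have e : (bins.length + 1) * L = bins.length * L + L := Nat.succ_mul _ _
      have hlt : 2 * k + L - 1 < (bins.length + 1) * L := by omega
      exact Nat.lt_succ_iff.mp ((Nat.div_lt_iff_lt_mul hLpos).mpr hlt)
    exact max_le hDle hceil
end

section
/- Let α be a type with decidable equality, L an even natural number, s : Multiset α, and bins : List (List α) a valid capacity-L packing of s, i.e., (bins.map (fun b => (b : Multiset α))).sum = s, every b ∈ bins has b.length ≤ L, and every b ∈ bins satisfies List.Chain' (· ≠ ·) b. Then for every color a : α, 2 * s.count a ≤ bins.length * L. -/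
private theorem chain_count_bound {α : Type*} [DecidableEq α] (a : α) :
    ∀ b : List α, List.Chain' (· ≠ ·) b → 2 * b.count a ≤ b.length + 1
  | [] => by simp
  | [x] => by
      intro _
      by_cases h : x = a <;> simp [List.count_cons, h]
  | x :: y :: t => by
      intro h
      have hxy : x ≠ y := h.rel_head
      have ht : List.Chain' (· ≠ ·) t := h.tail.tail
      have IH := chain_count_bound a t ht
      have hc : (x :: y :: t).count a ≤ t.count a + 1 := by
        by_cases hx : x = a <;> by_cases hy : y = a <;>
          simp_all [List.count_cons]
      calc 2 * (x :: y :: t).count a ≤ 2 * (t.count a + 1) := by omega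
        _ ≤ (x :: y :: t).length + 1 := by simp; omega

theorem even_capacity_packing_count_bound {α : Type*} [DecidableEq α]
    (L : ℕ) (hL : Even L) (s : Multiset α) (bins : List (List α))
    (hsum : (bins.map (fun b => (b : Multiset α))).sum = s)
    (hlen : ∀ b ∈ bins, b.length ≤ L)
    (hvalid : ∀ b ∈ bins, List.Chain' (· ≠ ·) b) :
    ∀ a : α, 2 * s.count a ≤ bins.length * L := by
  intro a
  subst hsum
  induction bins with
  | nil => simp
  | cons b bs ih =>
    have hb : 2 * b.count a ≤ L := by
      have h1 := chain_count_bound a b (hvalid b (by simp))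
      have h2 := hlen b (by simp)
      obtain ⟨k, hk⟩ := hL
      omega
    have := ih (fun x hx => hlen x (by simp [hx])) (fun x hx => hvalid x (by simp [hx]))
    simp only [List.bind_eq_flatMap, List.flatMap_cons, List.map_append, List.map_cons,
      List.sum_append, List.sum_cons, Multiset.count_add, List.length_cons, pure,
      List.map_nil, List.sum_nil, Multiset.coe_count, List.singleton_append, List.map_singleton, List.sum_singleton, List.singleton, Nat.succ_mul] at this ⊢
    omega
end
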